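/- Let λ ≥ 0. (i) The determinants D_k := det(I_k + λ·U_k^⊤U_k) satisfy the recursion D_k = (2 + λ)D_{k−1} − D_{k−2} for all k ≥ 3, with D_1 = 1 + λ and D_2 = (2 + λ)(1 + λ) − 1 (equivalently, the recursion holds for k ≥ 2 with the convention D_0 = 1). (ii) For every k ≥ 2, the matrix I_k + λ·U_k^⊤U_k is invertible, its (1, k) inverse entry equals −λ/D_k (equivalently, the (1,k) cofactor of I_k + λ·U_k^⊤U_k equals −λ), and its (k, k) inverse entry equals D_{k−1}/D_k. -/

import Mathlib

open Matrix

/-- The `k × k` upper triangular matrix with ones on and above the diagonal. -/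
def Umat (k : ℕ) : Matrix (Fin k) (Fin k) ℝ :=
  fun i j => if i ≤ j then 1 else 0

/-- `D_k = det(I_k + λ U_kᵀ U_k)` (equal to `1` for `k = 0`). -/
noncomputable def Ddet (lam : ℝ) (k : ℕ) : ℝ :=
  ((1 : Matrix (Fin k) (Fin k) ℝ) + lam • ((Umat k)ᵀ * Umat k)).det

def Vmat (k : ℕ) : Matrix (Fin k) (Fin k) ℝ :=
  fun i j => if i = j then 1 else if (i:ℕ)+1 = (j:ℕ) then -1 else 0

def Tmat (lam : ℝ) (k : ℕ) : Matrix (Fin k) (Fin k) ℝ :=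
  fun i j =>
    if (i:ℕ) = (j:ℕ) then (if (i:ℕ) = 0 then 1 + lam else 2 + lam)
    else if (i:ℕ)+1 = (j:ℕ) ∨ (j:ℕ)+1 = (i:ℕ) then -1 else 0

lemma sum_eq_one' {n : ℕ} (f : Fin n → ℝ) (a : Fin n) (h : ∀ j, j ≠ a → f j = 0) :
    ∑ j, f j = f a :=
  Finset.sum_eq_single_of_mem a (Finset.mem_univ a) (fun j _ hj => h j hj)

lemma sum_eq_two' {n : ℕ} (f : Fin n → ℝ) (a b : Fin n) (hab : a ≠ b)
    (h : ∀ j, j ≠ a → j ≠ b → f j = 0) : ∑ j, f j = f a + f b := by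
  rw [← Finset.sum_subset (Finset.subset_univ {a, b})
    (fun x _ hx => by
      simp only [Finset.mem_insert, Finset.mem_singleton] at hx
      push_neg at hx
      exact h x hx.1 hx.2)]
  rw [Finset.sum_pair hab]

lemma Vmat_mul_Umat (k : ℕ) : Vmat k * Umat k = 1 := by
  ext i j
  rw [Matrix.mul_apply, Matrix.one_apply]
  by_cases hi : (i:ℕ)+1 < k
  · rw [sum_eq_two' _ i ⟨(i:ℕ)+1, hi⟩ (by simp [Fin.ext_iff])
      (fun l hl1 hl2 => by
        have h1 : ¬ ((i:ℕ) = (l:ℕ)) := fun h => hl1 (Fin.ext h.symm)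
        have h2 : ¬ ((i:ℕ)+1 = (l:ℕ)) := fun h => hl2 (Fin.ext h.symm)
        simp only [Vmat]
        rw [if_neg (fun h => h1 (congrArg Fin.val h)), if_neg h2, zero_mul])]
    simp only [Vmat, Umat, Fin.ext_iff, Fin.le_def]
    split_ifs <;> first | ring1 | (exfalso; omega)
  · rw [sum_eq_one' _ i
      (fun l hl => by
        have h1 : ¬ ((i:ℕ) = (l:ℕ)) := fun h => hl (Fin.ext h.symm)
        have h2 : ¬ ((i:ℕ)+1 = (l:ℕ)) := fun h => absurd l.isLt (by omega)
        simp only [Vmat]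
        rw [if_neg (fun h => h1 (congrArg Fin.val h)), if_neg h2, zero_mul])]
    have hj : (j:ℕ) < k := j.isLt
    simp only [Vmat, Umat, Fin.ext_iff, Fin.le_def]
    split_ifs <;> first | ring1 | (exfalso; omega)

lemma Vmat_apply {k : ℕ} (l j : Fin k) :
    Vmat k l j = if (l:ℕ) = (j:ℕ) then 1 else if (l:ℕ)+1 = (j:ℕ) then -1 else 0 := by
  simp only [Vmat, Fin.ext_iff]

lemma Tmat_eq (lam : ℝ) (k : ℕ) :
    Tmat lam k = lam • (1 : Matrix (Fin k) (Fin k) ℝ) + (Vmat k)ᵀ * Vmat k := by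
  ext i j
  rw [Matrix.add_apply, Matrix.smul_apply, Matrix.one_apply, Matrix.mul_apply]
  simp only [Matrix.transpose_apply, Vmat_apply, Tmat, smul_eq_mul, Fin.ext_iff]
  by_cases hij : (i:ℕ) = (j:ℕ)
  · obtain rfl : i = j := Fin.ext hij
    by_cases h0 : (i:ℕ) = 0
    · rw [sum_eq_one' _ i (fun l hl => by
        have h1 : ¬((l:ℕ) = (i:ℕ)) := fun h => hl (Fin.ext h)
        rw [if_neg h1, if_neg (by omega), zero_mul])]
      split_ifs <;> first | ring1 | (exfalso; omega)
    · obtain ⟨m, hm⟩ : ∃ m, (i:ℕ) = m+1 := ⟨(i:ℕ)-1, by omega⟩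
      rw [sum_eq_two' _ i ⟨m, by omega⟩
        (by simp only [ne_eq, Fin.ext_iff, Fin.val_mk]; omega)
        (fun l hl1 hl2 => by
          have h1 : ¬((l:ℕ) = (i:ℕ)) := fun h => hl1 (Fin.ext h)
          have h2 : ¬((l:ℕ) = m) := fun h => hl2 (Fin.ext h)
          rw [if_neg h1, if_neg (by omega), zero_mul])]
      simp only [Fin.val_mk]
      split_ifs <;> first | ring1 | (exfalso; omega)
  · by_cases hij1 : (i:ℕ)+1 = (j:ℕ)
    · rw [sum_eq_one' _ i (fun l hl => by
        have h1 : ¬((l:ℕ) = (i:ℕ)) := fun h => hl (Fin.ext h)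
        by_cases h2 : (l:ℕ)+1 = (i:ℕ)
        · rw [if_neg h1, if_pos h2, if_neg (by omega), if_neg (by omega), mul_zero]
        · rw [if_neg h1, if_neg h2, zero_mul])]
      split_ifs <;> first | ring1 | (exfalso; omega)
    · by_cases hij2 : (j:ℕ)+1 = (i:ℕ)
      · rw [sum_eq_one' _ j (fun l hl => by
          have h1 : ¬((l:ℕ) = (j:ℕ)) := fun h => hl (Fin.ext h)
          by_cases h2 : (l:ℕ)+1 = (j:ℕ)
          · rw [if_neg (by omega), if_neg (by omega), zero_mul]
          · rw [if_neg h1, if_neg h2, mul_zero])]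
        split_ifs <;> first | ring1 | (exfalso; omega)
      · rw [Finset.sum_eq_zero (fun l _ => by
          by_cases h1 : (l:ℕ) = (i:ℕ)
          · rw [if_pos h1, if_neg (by omega), if_neg (by omega), mul_zero]
          · by_cases h2 : (l:ℕ)+1 = (i:ℕ)
            · rw [if_neg h1, if_pos h2, if_neg (by omega), if_neg (by omega), mul_zero]
            · rw [if_neg h1, if_neg h2, zero_mul])]
        split_ifs <;> first | ring1 | (exfalso; omega)

lemma key_eq (lam : ℝ) (k : ℕ) :
    (1 : Matrix (Fin k) (Fin k) ℝ) + lam • ((Umat k)ᵀ * Umat k) =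
      (Umat k)ᵀ * Tmat lam k * Umat k := by
  have h1 : (Umat k)ᵀ * ((Vmat k)ᵀ * Vmat k) * Umat k = 1 := by
    rw [Matrix.mul_assoc ((Umat k)ᵀ), Matrix.mul_assoc ((Vmat k)ᵀ), Vmat_mul_Umat,
      Matrix.mul_one, ← Matrix.transpose_mul, Vmat_mul_Umat, Matrix.transpose_one]
  have h2 : (Umat k)ᵀ * (lam • (1 : Matrix (Fin k) (Fin k) ℝ)) * Umat k
      = lam • ((Umat k)ᵀ * Umat k) := by
    rw [Matrix.mul_smul, Matrix.smul_mul, Matrix.mul_one]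
  rw [Tmat_eq, Matrix.mul_add, Matrix.add_mul, h2, h1, add_comm]

lemma det_Umat (k : ℕ) : (Umat k).det = 1 := by
  rw [Matrix.det_of_upperTriangular (by
    intro i j hij
    simp only [id] at hij
    exact if_neg (not_le.mpr hij))]
  simp [Umat]

lemma Ddet_eq (lam : ℝ) (k : ℕ) : Ddet lam k = (Tmat lam k).det := by
  rw [Ddet, key_eq, Matrix.det_mul, Matrix.det_mul, Matrix.det_transpose, det_Umat]
  ring

lemma succAbove_val {k : ℕ} (p : Fin (k+1)) (i : Fin k) :
    ((p.succAbove i : Fin (k+1)) : ℕ) = if (i:ℕ) < (p:ℕ) then (i:ℕ) else (i:ℕ)+1 := by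
  simp only [Fin.succAbove, Fin.lt_def, Fin.coe_castSucc]
  split_ifs <;> simp [Fin.val_succ]

lemma Tmat_submatrix {k k' : ℕ} (lam : ℝ) (f g : Fin k' → Fin k)
    (hf : ∀ i, (f i : ℕ) = (i:ℕ)) (hg : ∀ j, (g j : ℕ) = (j:ℕ)) :
    (Tmat lam k).submatrix f g = Tmat lam k' := by
  ext i j
  simp only [Tmat, Matrix.submatrix_apply, hf, hg]

lemma detT_rec (lam : ℝ) (n : ℕ) :
    (Tmat lam (n+2)).det = (2+lam) * (Tmat lam (n+1)).det - (Tmat lam n).det := by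
  have e1 : Tmat lam (n+2) (Fin.last (n+1)) ⟨n, by omega⟩ = -1 := by
    simp [Tmat, Fin.val_last]
  have e2 : Tmat lam (n+2) (Fin.last (n+1)) (Fin.last (n+1)) = 2+lam := by
    simp [Tmat, Fin.val_last]
  have e3 : ((Tmat lam (n+2)).submatrix (Fin.last (n+1)).succAbove
      (Fin.last (n+1)).succAbove) = Tmat lam (n+1) :=
    Tmat_submatrix _ _ _ (fun i => by simp [Fin.succAbove_last])
      (fun i => by simp [Fin.succAbove_last])
  set B := (Tmat lam (n+2)).submatrix (Fin.last (n+1)).succAbove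
      ((⟨n, by omega⟩ : Fin (n+2)).succAbove) with hB
  have hBentry : ∀ i : Fin (n+1), B i (Fin.last n) = if (i:ℕ) = n then -1 else 0 := by
    intro i
    have hi : (i:ℕ) < n+1 := i.isLt
    simp only [hB, Matrix.submatrix_apply, Tmat, succAbove_val, Fin.val_last, Fin.val_mk,
      Fin.succAbove_last, Fin.coe_castSucc]
    split_ifs <;> first | rfl | (exfalso; omega)
  have e4 : B.det = -(Tmat lam n).det := by
    rw [Matrix.det_succ_column _ (Fin.last n),
      sum_eq_one' _ (Fin.last n) (fun i hi => by
        rw [hBentry i, if_neg (fun h => hi (Fin.ext (by simp [Fin.val_last, h]))),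
          mul_zero, zero_mul])]
    have h5 : (B.submatrix (Fin.last n).succAbove (Fin.last n).succAbove) = Tmat lam n := by
      rw [hB, Matrix.submatrix_submatrix]
      exact Tmat_submatrix _ _ _
        (fun i => by
          have : (i:ℕ) < n := i.isLt
          simp only [Function.comp_apply, succAbove_val, Fin.val_last, Fin.coe_castSucc]
          split_ifs <;> omega)
        (fun j => by
          have : (j:ℕ) < n := j.isLt
          simp only [Function.comp_apply, succAbove_val, Fin.val_last, Fin.val_mk,
            Fin.coe_castSucc]
          split_ifs <;> omega)
    rw [h5, hBentry, if_pos (by simp [Fin.val_last]), Fin.val_last]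
    have : (-1:ℝ)^(n+n) = 1 := Even.neg_one_pow ⟨n, by ring⟩
    rw [this]
    ring
  rw [Matrix.det_succ_row _ (Fin.last (n+1)),
    sum_eq_two' _ (⟨n, by omega⟩ : Fin (n+2)) (Fin.last (n+1))
      (by simp [Fin.ext_iff, Fin.val_last])
      (fun j hj1 hj2 => by
        have h1 : (j:ℕ) ≠ n := fun h => hj1 (Fin.ext h)
        have h2 : (j:ℕ) ≠ n+1 := fun h => hj2 (Fin.ext (by simp [Fin.val_last, h]))
        have hz : Tmat lam (n+2) (Fin.last (n+1)) j = 0 := by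
          simp only [Tmat, Fin.val_last]
          rw [if_neg (by omega), if_neg (by omega)]
        rw [hz, mul_zero, zero_mul])]
  rw [e1, e2, e3, ← hB, e4]
  simp only [Fin.val_last, Fin.val_mk]
  have s1 : (-1:ℝ)^(n+1+n) = -1 := Odd.neg_one_pow ⟨n, by ring⟩
  have s2 : (-1:ℝ)^(n+1+(n+1)) = 1 := Even.neg_one_pow ⟨n+1, by ring⟩
  rw [s1, s2]
  ring

lemma submatrix_updateRow_ne {n m' : ℕ} (A : Matrix (Fin n) (Fin n) ℝ) (r : Fin n)
    (v : Fin n → ℝ) (f g : Fin m' → Fin n) (hf : ∀ i, f i ≠ r) :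
    (A.updateRow r v).submatrix f g = A.submatrix f g := by
  ext i j
  simp [Matrix.submatrix_apply, Matrix.updateRow_ne (hf i)]

-- generic adjugate-entry helper: adjugate T z last for z : Fin (m+2)
lemma adj_aux (lam : ℝ) (m : ℕ) (z : Fin (m+2)) :
    Matrix.adjugate (Tmat lam (m+2)) z (Fin.last (m+1)) =
      (-1:ℝ)^((m+1) + (z:ℕ)) *
        ((Tmat lam (m+2)).submatrix Fin.castSucc z.succAbove).det := by
  rw [Matrix.adjugate_apply, Matrix.det_succ_row _ (Fin.last (m+1))]
  rw [sum_eq_one' _ z (fun j hj => by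
    rw [Matrix.updateRow_self]
    rw [Pi.single_apply, if_neg hj, mul_zero, zero_mul])]
  rw [Matrix.updateRow_self, Pi.single_apply, if_pos rfl,
    submatrix_updateRow_ne _ _ _ _ _ (fun i => Fin.succAbove_ne _ i),
    Fin.succAbove_last, Fin.val_last, mul_one]

lemma adj_zero_last (lam : ℝ) (m : ℕ) :
    Matrix.adjugate (Tmat lam (m+2)) ⟨0, by omega⟩ (Fin.last (m+1)) = 1 := by
  rw [adj_aux]
  have hlow : ((Tmat lam (m+2)).submatrix Fin.castSucc
      ((⟨0, by omega⟩ : Fin (m+2)).succAbove)).det = (-1)^(m+1) := by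
    rw [Matrix.det_of_lowerTriangular _ (fun i j hij => by
      simp only [Matrix.submatrix_apply, Tmat, succAbove_val, Fin.coe_castSucc, Fin.val_mk]
      have hij' : (i:ℕ) < (j:ℕ) := hij
      have hi := i.isLt
      have hj := j.isLt
      split_ifs <;> first | rfl | (exfalso; omega))]
    have : ∀ i : Fin (m+1), (Tmat lam (m+2)) (Fin.castSucc i)
        ((⟨0, by omega⟩ : Fin (m+2)).succAbove i) = -1 := fun i => by
      have hi := i.isLt
      simp only [Tmat, succAbove_val, Fin.coe_castSucc, Fin.val_mk]
      split_ifs <;> first | rfl | (exfalso; omega)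
    simp only [Matrix.submatrix_apply, this, Finset.prod_const, Finset.card_univ,
      Fintype.card_fin]
  rw [hlow, Fin.val_mk, ← pow_add]
  exact Even.neg_one_pow ⟨m+1, by ring⟩

lemma adj_one_last (lam : ℝ) (m : ℕ) :
    Matrix.adjugate (Tmat lam (m+2)) ⟨1, by omega⟩ (Fin.last (m+1)) = 1 + lam := by
  rw [adj_aux]
  have hlow : ((Tmat lam (m+2)).submatrix Fin.castSucc
      ((⟨1, by omega⟩ : Fin (m+2)).succAbove)).det = (1+lam) * (-1)^m := by
    rw [Matrix.det_of_lowerTriangular _ (fun i j hij => by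
      simp only [Matrix.submatrix_apply, Tmat, succAbove_val, Fin.coe_castSucc, Fin.val_mk]
      have hij' : (i:ℕ) < (j:ℕ) := hij
      have hi := i.isLt
      have hj := j.isLt
      split_ifs <;> first | rfl | (exfalso; omega))]
    have hdiag : ∀ i : Fin (m+1), (Tmat lam (m+2)) (Fin.castSucc i)
        ((⟨1, by omega⟩ : Fin (m+2)).succAbove i)
        = if (i:ℕ) = 0 then 1+lam else -1 := fun i => by
      have hi := i.isLt
      simp only [Tmat, succAbove_val, Fin.coe_castSucc, Fin.val_mk]
      split_ifs <;> first | rfl | (exfalso; omega)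
    simp only [Matrix.submatrix_apply, hdiag]
    rw [Fin.prod_univ_succ]
    simp only [Fin.val_zero, Fin.val_succ, if_pos rfl]
    rw [Finset.prod_congr rfl (fun i _ => by rw [if_neg (by omega)])]
    simp [Finset.prod_const, Finset.card_univ]
  rw [hlow, Fin.val_mk]
  have : (-1:ℝ)^(m+1+1) * ((1+lam) * (-1)^m) = (1+lam) * ((-1:ℝ)^(m+1+1) * (-1)^m) := by ring
  rw [this, ← pow_add, Even.neg_one_pow ⟨m+1, by ring⟩, mul_one]

lemma adj_last_last (lam : ℝ) (m : ℕ) :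
    Matrix.adjugate (Tmat lam (m+2)) (Fin.last (m+1)) (Fin.last (m+1)) =
      (Tmat lam (m+1)).det := by
  rw [adj_aux, Fin.val_last, Even.neg_one_pow ⟨m+1, by ring⟩, one_mul,
    Fin.succAbove_last,
    Tmat_submatrix _ _ _ (fun i => by simp) (fun i => by simp)]

lemma detT_one (lam : ℝ) : (Tmat lam 1).det = 1 + lam := by
  rw [Matrix.det_fin_one]
  simp [Tmat]

lemma detT_ge (lam : ℝ) (hlam : 0 ≤ lam) :
    ∀ n, 1 ≤ (Tmat lam n).det ∧ (Tmat lam n).det ≤ (Tmat lam (n+1)).det := by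
  intro n
  induction n with
  | zero =>
    constructor
    · simp
    · rw [detT_one]; simp; linarith
  | succ n ih =>
    have hrec := detT_rec lam n
    exact ⟨le_trans ih.1 ih.2, by nlinarith [ih.1, ih.2]⟩

theorem Ddet_recursion_and_inverse_entries
    (lam : ℝ) (hlam : 0 ≤ lam) :
    (Ddet lam 0 = 1) ∧
    (Ddet lam 1 = 1 + lam) ∧
    (Ddet lam 2 = (2 + lam) * (1 + lam) - 1) ∧
    (∀ k : ℕ, 2 ≤ k →
      Ddet lam k = (2 + lam) * Ddet lam (k - 1) - Ddet lam (k - 2)) ∧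
    (∀ k : ℕ, (hk : 2 ≤ k) →
      IsUnit ((1 : Matrix (Fin k) (Fin k) ℝ) + lam • ((Umat k)ᵀ * Umat k)).det ∧
      ((1 : Matrix (Fin k) (Fin k) ℝ) + lam • ((Umat k)ᵀ * Umat k))⁻¹
          ⟨0, by omega⟩ ⟨k - 1, by omega⟩ = -lam / Ddet lam k ∧
      ((1 : Matrix (Fin k) (Fin k) ℝ) + lam • ((Umat k)ᵀ * Umat k))⁻¹
          ⟨k - 1, by omega⟩ ⟨k - 1, by omega⟩ = Ddet lam (k - 1) / Ddet lam k) := by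
  refine ⟨?_, ?_, ?_, ?_, ?_⟩
  · rw [Ddet_eq]; simp
  · rw [Ddet_eq, detT_one]
  · rw [Ddet_eq]
    have h := detT_rec lam 0
    rw [show (0:ℕ)+2 = 2 from rfl, show (0:ℕ)+1 = 1 from rfl] at h
    rw [h, detT_one]
    simp
  · intro k hk
    obtain ⟨n, rfl⟩ : ∃ n, k = n+2 := ⟨k-2, by omega⟩
    rw [show n+2-1 = n+1 from rfl, show n+2-2 = n from rfl, Ddet_eq, Ddet_eq, Ddet_eq]
    exact detT_rec lam n
  · intro k hk
    obtain ⟨m, rfl⟩ : ∃ m, k = m+2 := ⟨k-2, by omega⟩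
    set T := Tmat lam (m+2) with hT
    have hd1 : 1 ≤ T.det := (detT_ge lam hlam (m+2)).1
    have hd0 : T.det ≠ 0 := by linarith
    have hd0' : (Tmat lam (m+1)).det ≠ 0 := by
      have := (detT_ge lam hlam (m+1)).1; linarith
    have hunit : IsUnit ((1 : Matrix (Fin (m+2)) (Fin (m+2)) ℝ)
        + lam • ((Umat (m+2))ᵀ * Umat (m+2))).det := by
      rw [show ((1 : Matrix (Fin (m+2)) (Fin (m+2)) ℝ)
        + lam • ((Umat (m+2))ᵀ * Umat (m+2))).det = Ddet lam (m+2) from rfl, Ddet_eq]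
      exact isUnit_iff_ne_zero.mpr hd0
    have hUinv : (Umat (m+2))⁻¹ = Vmat (m+2) := Matrix.inv_eq_left_inv (Vmat_mul_Umat _)
    have hUtinv : ((Umat (m+2))ᵀ)⁻¹ = (Vmat (m+2))ᵀ := by
      rw [← Matrix.transpose_nonsing_inv, hUinv]
    have hMinv : ((1 : Matrix (Fin (m+2)) (Fin (m+2)) ℝ)
        + lam • ((Umat (m+2))ᵀ * Umat (m+2)))⁻¹ = Vmat (m+2) * (T⁻¹ * (Vmat (m+2))ᵀ) := by
      rw [key_eq, Matrix.mul_inv_rev, Matrix.mul_inv_rev, hUinv, hUtinv, ← hT]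
    have hlast : (Fin.last (m+1) : Fin (m+2)) = ⟨m+2-1, by omega⟩ := rfl
    have hTinv : ∀ i j, T⁻¹ i j = (T.det)⁻¹ * T.adjugate i j := fun i j => by
      rw [Matrix.inv_def, Matrix.smul_apply, Ring.inverse_eq_inv', smul_eq_mul]
    have hcol : ∀ x, (T⁻¹ * (Vmat (m+2))ᵀ) x (Fin.last (m+1)) = T⁻¹ x (Fin.last (m+1)) := by
      intro x
      rw [Matrix.mul_apply]
      rw [sum_eq_one' _ (Fin.last (m+1)) (fun y hy => by
        have h1 : ¬((Fin.last (m+1) : Fin (m+2)) : ℕ) = (y:ℕ) :=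
          fun h => hy (Fin.ext h.symm)
        have h2 : ¬((Fin.last (m+1) : Fin (m+2)) : ℕ)+1 = (y:ℕ) := by
          have := y.isLt
          simp only [Fin.val_last]
          omega
        rw [Matrix.transpose_apply, Vmat_apply, if_neg h1, if_neg h2, mul_zero])]
      rw [Matrix.transpose_apply, Vmat_apply, if_pos rfl, mul_one]
    constructor
    · exact hunit
    constructor
    · rw [hMinv, ← hlast, Matrix.mul_apply]
      simp only [hcol]
      rw [sum_eq_two' _ (⟨0, by omega⟩ : Fin (m+2)) (⟨1, by omega⟩ : Fin (m+2))
          (by simp [Fin.ext_iff])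
          (fun x hx1 hx2 => by
            have h1 : ¬((⟨0, by omega⟩ : Fin (m+2)) : ℕ) = (x:ℕ) :=
              fun h => hx1 (Fin.ext h.symm)
            have h2 : ¬((⟨0, by omega⟩ : Fin (m+2)) : ℕ)+1 = (x:ℕ) := by
              simp only [Fin.val_mk]
              intro h
              exact hx2 (Fin.ext (by simp [Fin.val_mk]; omega))
            rw [Vmat_apply, if_neg h1, if_neg h2, zero_mul])]
      rw [Vmat_apply, if_pos rfl, Vmat_apply, if_neg (by simp [Fin.val_mk]),
        if_pos (by simp [Fin.val_mk])]
      rw [hTinv, hTinv, adj_zero_last, adj_one_last, Ddet_eq]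
      rw [← hT]
      field_simp
      try ring
    · rw [hMinv, ← hlast, Matrix.mul_apply]
      simp only [hcol]
      rw [sum_eq_one' _ (Fin.last (m+1)) (fun x hx => by
        have h1 : ¬((Fin.last (m+1) : Fin (m+2)) : ℕ) = (x:ℕ) :=
          fun h => hx (Fin.ext h.symm)
        have h2 : ¬((Fin.last (m+1) : Fin (m+2)) : ℕ)+1 = (x:ℕ) := by
          have := x.isLt
          simp only [Fin.val_last]
          omega
        rw [Vmat_apply, if_neg h1, if_neg h2, zero_mul])]
      rw [Vmat_apply, if_pos rfl, one_mul, hTinv, adj_last_last,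
        show m+2-1 = m+1 from rfl, Ddet_eq, Ddet_eq]
      rw [← hT]
      field_simp
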